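/- Let C be a triangulated category carrying a bounded weight structure w and a bounded t-structure t satisfying the transversality properties (a)–(d). Let M and N be objects of the heart C_{w=0}. Then rad_{C_{w=0}}(M,N) = { α ∈ Hom_C(M,N) : H^m(α) = 0 for all m ∈ ℤ }. (Corollary 1.H) -/

import Mathlib

open CategoryTheory Limits Pretriangulated ZeroObject

namespace Absolute

universe v u

/-- The radical of a preadditive category: `α : M ⟶ N` belongs to the radical if and only if
for every `β : N ⟶ M`, the endomorphism `𝟙 M - β ∘ α` of `M` is an isomorphism. -/
def radical {C : Type u} [Category.{v} C] [Preadditive C] (M N : C) : Set (M ⟶ N) :=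
  {α | ∀ β : N ⟶ M, IsIso (𝟙 M - α ≫ β)}

/-- Full subcategories of preadditive categories are preadditive. -/
instance fullSubcategoryPreadditive {C : Type u} [Category.{v} C] [Preadditive C]
    (Z : C → Prop) : Preadditive (ObjectProperty.FullSubcategory Z) where
  homGroup X Y := Equiv.addCommGroup (α := X ⟶ Y) (β := X.obj ⟶ Y.obj)
    ⟨fun f => f.hom, fun f => ObjectProperty.homMk f, fun _ => rfl, fun _ => rfl⟩
  add_comp _ _ _ f f' g := ObjectProperty.hom_ext _ (Preadditive.add_comp _ _ _ f.hom f'.hom g.hom)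
  comp_add _ _ _ f g g' := ObjectProperty.hom_ext _ (Preadditive.comp_add _ _ _ f.hom g.hom g'.hom)

/-- The property that morphisms `f : A ⟶ M` and `g : M ⟶ B` between objects satisfying `Z`
form a short exact sequence `0 ⟶ A ⟶ M ⟶ B ⟶ 0` in the full subcategory of objects
satisfying `Z`. -/
def IsShortExactInSub {C : Type u} [Category.{v} C] [Preadditive C] (Z : C → Prop)
    {A M B : C} (hA : Z A) (hM : Z M) (hB : Z B) (f : A ⟶ M) (g : M ⟶ B) : Prop :=
  let A' : ObjectProperty.FullSubcategory Z := ⟨A, hA⟩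
  let M' : ObjectProperty.FullSubcategory Z := ⟨M, hM⟩
  let B' : ObjectProperty.FullSubcategory Z := ⟨B, hB⟩
  let f' : A' ⟶ M' := ObjectProperty.homMk f
  let g' : M' ⟶ B' := ObjectProperty.homMk g
  Mono f' ∧ Epi g' ∧ ∃ w : f' ≫ g' = 0, (ShortComplex.mk f' g' w).Exact

variable (C : Type u) [Category.{v} C] [Preadditive C] [HasZeroObject C]
  [HasShift C ℤ] [∀ n : ℤ, (shiftFunctor C n).Additive] [Pretriangulated C]

/-- A bounded weight structure `w` on a triangulated category `C`, given by the classes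
`wle n = C_{w ≤ n}` and `wge n = C_{w ≥ n}`. -/
structure BoundedWeightStructure where
  wle : ℤ → Set C
  wge : ℤ → Set C
  wle_iso : ∀ (n : ℤ) ⦃X Y : C⦄, (X ≅ Y) → X ∈ wle n → Y ∈ wle n
  wge_iso : ∀ (n : ℤ) ⦃X Y : C⦄, (X ≅ Y) → X ∈ wge n → Y ∈ wge n
  wle_summand : ∀ (n : ℤ) ⦃X Y : C⦄ (i : X ⟶ Y) (r : Y ⟶ X),
    i ≫ r = 𝟙 X → Y ∈ wle n → X ∈ wle n
  wge_summand : ∀ (n : ℤ) ⦃X Y : C⦄ (i : X ⟶ Y) (r : Y ⟶ X),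
    i ≫ r = 𝟙 X → Y ∈ wge n → X ∈ wge n
  wle_zero : (0 : C) ∈ wle 0
  wge_zero : (0 : C) ∈ wge 0
  /-- `C_{w ≤ n} := C_{w ≤ 0}[n]` -/
  wle_shift : ∀ (n k : ℤ) (X : C), X ∈ wle n ↔ X⟦k⟧ ∈ wle (n + k)
  wge_shift : ∀ (n k : ℤ) (X : C), X ∈ wge n ↔ X⟦k⟧ ∈ wge (n + k)
  wle_mono : ∀ n : ℤ, wle n ⊆ wle (n + 1)
  wge_anti : ∀ n : ℤ, wge (n + 1) ⊆ wge n
  w_orth : ∀ ⦃X Y : C⦄, X ∈ wle 0 → Y ∈ wge 1 → ∀ f : X ⟶ Y, f = 0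
  w_dec : ∀ M : C, ∃ (A B : C) (f : A ⟶ M) (g : M ⟶ B) (h : B ⟶ A⟦(1 : ℤ)⟧),
    Triangle.mk f g h ∈ (distTriang C) ∧ A ∈ wle 0 ∧ B ∈ wge 1
  w_bounded : ∀ M : C, ∃ m n : ℤ, M ∈ wge m ∧ M ∈ wle n

/-- The heart `C_{w = n}` of a (bounded) weight structure. -/
def BoundedWeightStructure.wEq (w : BoundedWeightStructure C) (n : ℤ) : Set C :=
  w.wle n ∩ w.wge n

/-- A bounded t-structure `t` on a triangulated category `C`, given by the classes
`tle n = C^{t ≤ n}` and `tge n = C^{t ≥ n}`, together with its truncation functors and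
the associated cohomology functors `H m` with values in the heart `C^{t = 0}`. -/
structure BoundedTStructure where
  tle : ℤ → Set C
  tge : ℤ → Set C
  tle_iso : ∀ (n : ℤ) ⦃X Y : C⦄, (X ≅ Y) → X ∈ tle n → Y ∈ tle n
  tge_iso : ∀ (n : ℤ) ⦃X Y : C⦄, (X ≅ Y) → X ∈ tge n → Y ∈ tge n
  /-- `C^{t ≤ n} := C^{t ≤ 0}[-n]`, i.e. the cohomological indexing convention -/
  tle_shift : ∀ (n k : ℤ) (X : C), X ∈ tle n ↔ X⟦k⟧ ∈ tle (n - k)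
  tge_shift : ∀ (n k : ℤ) (X : C), X ∈ tge n ↔ X⟦k⟧ ∈ tge (n - k)
  tle_mono : ∀ n : ℤ, tle n ⊆ tle (n + 1)
  tge_anti : ∀ n : ℤ, tge (n + 1) ⊆ tge n
  t_orth : ∀ ⦃X Y : C⦄, X ∈ tle 0 → Y ∈ tge 1 → ∀ f : X ⟶ Y, f = 0
  t_bounded : ∀ M : C, ∃ m n : ℤ, M ∈ tge m ∧ M ∈ tle n
  /-- truncation functor `τ^{t ≤ m}` -/
  τle : ℤ → C ⥤ C
  /-- truncation functor `τ^{t ≥ m}` -/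
  τge : ℤ → C ⥤ C
  τle_mem : ∀ (m : ℤ) (X : C), (τle m).obj X ∈ tle m
  τge_mem : ∀ (m : ℤ) (X : C), (τge m).obj X ∈ tge m
  τleε : ∀ m : ℤ, τle m ⟶ 𝟭 C
  τgeη : ∀ m : ℤ, 𝟭 C ⟶ τge m
  τ_triangle : ∀ (m : ℤ) (X : C), ∃ h : (τge (m + 1)).obj X ⟶ ((τle m).obj X)⟦(1 : ℤ)⟧,
    Triangle.mk ((τleε m).app X) ((τgeη (m + 1)).app X) h ∈ distTriang C
  /-- the cohomology functors `H^m : C ⥤ C^{t = 0}`, viewed as endofunctors of `C` with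
  values in the heart -/
  H : ℤ → C ⥤ C
  H_additive : ∀ m : ℤ, (H m).Additive
  H_heart : ∀ (m : ℤ) (X : C), (H m).obj X ∈ tle 0 ∧ (H m).obj X ∈ tge 0
  H_shift : ∀ m : ℤ, Nonempty (shiftFunctor C (1 : ℤ) ⋙ H m ≅ H (m + 1))
  H_heart_id : ∀ X : C, X ∈ tle 0 → X ∈ tge 0 → Nonempty ((H 0).obj X ≅ X)
  H_vanish_le : ∀ (m n : ℤ) (X : C), X ∈ tle n → n < m → IsZero ((H m).obj X)
  H_vanish_ge : ∀ (m n : ℤ) (X : C), X ∈ tge n → m < n → IsZero ((H m).obj X)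
  /-- the family of cohomology functors associated to a bounded t-structure is conservative -/
  H_conservative : ∀ ⦃X Y : C⦄ (f : X ⟶ Y), (∀ m : ℤ, IsIso ((H m).map f)) → IsIso f

/-- The intersection `C^{t = m} = C^{t ≤ m} ∩ C^{t ≥ m}`. -/
def BoundedTStructure.tEq (t : BoundedTStructure C) (m : ℤ) : Set C :=
  t.tle m ∩ t.tge m

variable [HasFiniteBiproducts C]

/-- A bounded weight structure and a bounded t-structure on `C` satisfying the
transversality properties (a)–(d). -/
structure TransversalPackage extends BoundedWeightStructure C, BoundedTStructure C where
  /-- (a): each `C_{w = n}^{t = m}` is abelian ... -/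
  wt_abelian : ∀ (n m : ℤ),
    Abelian (ObjectProperty.FullSubcategory (fun X : C => (X ∈ wle n ∧ X ∈ wge n) ∧ (X ∈ tle m ∧ X ∈ tge m)))
  /-- (a): ... and semisimple (every monomorphism splits) ... -/
  wt_semisimple : ∀ (n m : ℤ)
    ⦃X Y : ObjectProperty.FullSubcategory (fun X : C => (X ∈ wle n ∧ X ∈ wge n) ∧ (X ∈ tle m ∧ X ∈ tge m))⦄
    (f : X ⟶ Y), Mono f → ∃ r : Y ⟶ X, f ≫ r = 𝟙 X
  /-- (a): ... and every object of `C_{w = 0}` is isomorphic to a finite direct sum of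
  objects of the categories `C_{w = 0}^{t = m}`, `m ∈ ℤ` -/
  wheart_sum : ∀ X : C, X ∈ wle 0 → X ∈ wge 0 →
    ∃ (k : ℕ) (Y : Fin k → C) (m : Fin k → ℤ),
      (∀ i, (Y i ∈ wle 0 ∧ Y i ∈ wge 0) ∧ (Y i ∈ tle (m i) ∧ Y i ∈ tge (m i))) ∧
      Nonempty (X ≅ ⨁ Y)
  /-- (b): for fixed `m` and `n₁ ≠ n₂`, every morphism from an object of `C_{w = n₁}^{t = m}`
  to an object of `C_{w = n₂}^{t = m}` is zero -/
  wt_hom_vanish : ∀ (m n₁ n₂ : ℤ), n₁ ≠ n₂ → ∀ ⦃X Y : C⦄,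
    X ∈ wle n₁ → X ∈ wge n₁ → X ∈ tle m → X ∈ tge m →
    Y ∈ wle n₂ → Y ∈ wge n₂ → Y ∈ tle m → Y ∈ tge m → ∀ f : X ⟶ Y, f = 0
  /-- (c): every object of `C^{t = m}` admits weight filtrations concentrated at any `n`,
  with outer terms in `C^{t = m}`, which are short exact sequences in `C^{t = m}` -/
  t_weight_filtration : ∀ (m n : ℤ) (M : C) (hM : M ∈ tle m ∧ M ∈ tge m),
    ∃ (A B : C) (hA : A ∈ tle m ∧ A ∈ tge m) (hB : B ∈ tle m ∧ B ∈ tge m)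
      (f : A ⟶ M) (g : M ⟶ B) (δ : B ⟶ A⟦(1 : ℤ)⟧),
      Triangle.mk f g δ ∈ (distTriang C) ∧ A ∈ wle (n - 1) ∧ B ∈ wge n ∧
      IsShortExactInSub (fun X : C => X ∈ tle m ∧ X ∈ tge m) hA hM hB f g
  /-- (d): the truncation functors preserve `C_{w ≤ n}` and `C_{w ≥ n}` -/
  τle_wle : ∀ (m n : ℤ) (X : C), X ∈ wle n → (τle m).obj X ∈ wle n
  τle_wge : ∀ (m n : ℤ) (X : C), X ∈ wge n → (τle m).obj X ∈ wge n
  τge_wle : ∀ (m n : ℤ) (X : C), X ∈ wle n → (τge m).obj X ∈ wle n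
  τge_wge : ∀ (m n : ℤ) (X : C), X ∈ wge n → (τge m).obj X ∈ wge n

lemma fullSub_isIso {D : Type*} [Category D] {Z : D → Prop} {X Y : ObjectProperty.FullSubcategory Z}
    (g : X ⟶ Y) (h : IsIso (show X.obj ⟶ Y.obj from g.hom)) : IsIso g := by
  obtain ⟨i, h1, h2⟩ := h
  exact ⟨ObjectProperty.homMk i, ObjectProperty.hom_ext _ h1, ObjectProperty.hom_ext _ h2⟩

lemma fullSub_isIso' {D : Type*} [Category D] {Z : D → Prop} {X Y : ObjectProperty.FullSubcategory Z}
    (g : X ⟶ Y) (h : IsIso g) : IsIso (show X.obj ⟶ Y.obj from g.hom) := by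
  obtain ⟨i, h1, h2⟩ := h
  exact ⟨i.hom, congrArg (fun x => x.hom) h1, congrArg (fun x => x.hom) h2⟩

/-- The radical is a two-sided ideal: pre- and postcomposing a radical morphism yields a
radical morphism. -/
lemma rad_ideal {D : Type*} [Category D] [Preadditive D] {M N : D} (α : M ⟶ N)
    (h : ∀ β : N ⟶ M, IsIso (𝟙 M - α ≫ β)) {Y Z : D} (γ : Y ⟶ M) (δ : N ⟶ Z)
    (β : Z ⟶ Y) : IsIso (𝟙 Y - (γ ≫ α ≫ δ) ≫ β) := by
  have hb : IsIso (𝟙 M - α ≫ (δ ≫ β ≫ γ)) := h _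
  obtain ⟨w, hw1, hw2⟩ := hb.out
  have k0 : α ≫ δ ≫ β ≫ γ ≫ w = w - 𝟙 M := by
    rw [Preadditive.sub_comp, Category.id_comp] at hw1
    try simp only [Category.assoc] at hw1
    rw [← hw1]; abel
  have k0' : w ≫ α ≫ δ ≫ β ≫ γ = w - 𝟙 M := by
    rw [Preadditive.comp_sub, Category.comp_id] at hw2
    try simp only [Category.assoc] at hw2
    rw [← hw2]; abel
  refine ⟨⟨𝟙 Y + γ ≫ w ≫ α ≫ δ ≫ β, ?_, ?_⟩⟩
  · have k1 : γ ≫ α ≫ δ ≫ β ≫ γ ≫ w ≫ α ≫ δ ≫ β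
        = γ ≫ w ≫ α ≫ δ ≫ β - γ ≫ α ≫ δ ≫ β := by
      calc γ ≫ α ≫ δ ≫ β ≫ γ ≫ w ≫ α ≫ δ ≫ β
          = γ ≫ ((α ≫ δ ≫ β ≫ γ ≫ w) ≫ (α ≫ δ ≫ β)) := by
            simp only [Category.assoc]
        _ = γ ≫ ((w - 𝟙 M) ≫ (α ≫ δ ≫ β)) := by rw [k0]
        _ = γ ≫ w ≫ α ≫ δ ≫ β - γ ≫ α ≫ δ ≫ β := by
            simp only [Preadditive.sub_comp, Preadditive.comp_sub, Category.id_comp,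
              Category.assoc]
    simp only [Preadditive.sub_comp, Preadditive.comp_add, Preadditive.add_comp,
      Preadditive.comp_sub, Category.id_comp, Category.comp_id, Category.assoc]
    rw [k1]; abel
  · have k1 : γ ≫ w ≫ α ≫ δ ≫ β ≫ γ ≫ α ≫ δ ≫ β
        = γ ≫ w ≫ α ≫ δ ≫ β - γ ≫ α ≫ δ ≫ β := by
      calc γ ≫ w ≫ α ≫ δ ≫ β ≫ γ ≫ α ≫ δ ≫ β
          = γ ≫ ((w ≫ α ≫ δ ≫ β ≫ γ) ≫ (α ≫ δ ≫ β)) := by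
            simp only [Category.assoc]
        _ = γ ≫ ((w - 𝟙 M) ≫ (α ≫ δ ≫ β)) := by rw [k0']
        _ = γ ≫ w ≫ α ≫ δ ≫ β - γ ≫ α ≫ δ ≫ β := by
            simp only [Preadditive.sub_comp, Preadditive.comp_sub, Category.id_comp,
              Category.assoc]
    simp only [Preadditive.sub_comp, Preadditive.comp_add, Preadditive.add_comp,
      Preadditive.comp_sub, Category.id_comp, Category.comp_id, Category.assoc]
    rw [k1]; abel

set_option maxHeartbeats 1000000 in
/-- In the semisimple abelian category `C_{w=0}^{t=d}`, every morphism lying in the radical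
is zero. -/
lemma semisimple_rad_zero {C : Type u} [Category.{v} C] [Preadditive C] [HasZeroObject C]
    [HasShift C ℤ] [∀ n : ℤ, (shiftFunctor C n).Additive] [Pretriangulated C]
    [HasFiniteBiproducts C]
    (P : TransversalPackage C) (d : ℤ) {Y Z : C}
    (hY : (Y ∈ P.wle 0 ∧ Y ∈ P.wge 0) ∧ (Y ∈ P.tle d ∧ Y ∈ P.tge d))
    (hZ : (Z ∈ P.wle 0 ∧ Z ∈ P.wge 0) ∧ (Z ∈ P.tle d ∧ Z ∈ P.tge d))
    (f : Y ⟶ Z) (hf : ∀ β : Z ⟶ Y, IsIso (𝟙 Y - f ≫ β)) : f = 0 := by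
  letI : Abelian (ObjectProperty.FullSubcategory
      (fun X : C => (X ∈ P.wle 0 ∧ X ∈ P.wge 0) ∧ (X ∈ P.tle d ∧ X ∈ P.tge d))) :=
    P.wt_abelian 0 d
  let Y' : ObjectProperty.FullSubcategory
      (fun X : C => (X ∈ P.wle 0 ∧ X ∈ P.wge 0) ∧ (X ∈ P.tle d ∧ X ∈ P.tge d)) := ⟨Y, hY⟩
  let Z' : ObjectProperty.FullSubcategory
      (fun X : C => (X ∈ P.wle 0 ∧ X ∈ P.wge 0) ∧ (X ∈ P.tle d ∧ X ∈ P.tge d)) := ⟨Z, hZ⟩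
  let f' : Y' ⟶ Z' := ObjectProperty.homMk f
  -- the kernel of `f'` splits
  obtain ⟨ρ, hρ⟩ := P.wt_semisimple 0 d (kernel.ι f') inferInstance
  -- `f'` factors through the coimage `Q = coker (ker f')`
  obtain ⟨g, hg⟩ : ∃ g : cokernel (kernel.ι f') ⟶ Z',
      cokernel.π (kernel.ι f') ≫ g = f' := ⟨_, cokernel.π_desc _ _ (kernel.condition f')⟩
  have hke : kernel.ι f' ≫ (𝟙 Y' - ρ ≫ kernel.ι f') = 0 := by
    rw [Preadditive.comp_sub, Category.comp_id, ← Category.assoc, hρ, Category.id_comp,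
      sub_self]
  -- the canonical epi `π : Y' ⟶ Q` splits
  obtain ⟨s, hs⟩ : ∃ s : cokernel (kernel.ι f') ⟶ Y',
      cokernel.π (kernel.ι f') ≫ s = 𝟙 Y' - ρ ≫ kernel.ι f' :=
    ⟨_, cokernel.π_desc _ _ hke⟩
  have hsp : s ≫ cokernel.π (kernel.ι f') = 𝟙 (cokernel (kernel.ι f')) := by
    refine (cancel_epi (cokernel.π (kernel.ι f'))).1 ?_
    rw [← Category.assoc, hs, Preadditive.sub_comp, Category.id_comp, Category.assoc,
      cokernel.condition, comp_zero, sub_zero, Category.comp_id]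
  -- the mediating morphism `g : Q ⟶ Z'` is a mono, hence splits
  have hsf : s ≫ f' = g := by
    have h := congrArg (CategoryStruct.comp s) hg
    rw [← Category.assoc, hsp, Category.id_comp] at h
    exact h.symm
  have h2 : (kernel.ι g ≫ s) ≫ f' = 0 := by
    rw [Category.assoc, hsf, kernel.condition]
  have hk2 : kernel.ι g = 0 := by
    have h3 := kernel.lift_ι f' _ h2
    calc kernel.ι g = (kernel.ι g ≫ s) ≫ cokernel.π (kernel.ι f') := by
          rw [Category.assoc, hsp, Category.comp_id]
      _ = (kernel.lift f' _ h2 ≫ kernel.ι f') ≫ cokernel.π (kernel.ι f') := by rw [h3]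
      _ = 0 := by rw [Category.assoc, cokernel.condition, comp_zero]
  have hmono : Mono g := Preadditive.mono_of_kernel_zero hk2
  obtain ⟨r, hr⟩ := P.wt_semisimple 0 d g hmono
  -- transfer the composition identities to `C`
  let Q : C := (cokernel (kernel.ι f')).obj
  let pC : Y ⟶ Q := (cokernel.π (kernel.ι f')).hom
  let gC : Q ⟶ Z := g.hom
  let rC : Z ⟶ Q := r.hom
  let sC : Q ⟶ Y := s.hom
  have hgC : pC ≫ gC = f := congrArg (fun x => x.hom) hg
  have hrC : gC ≫ rC = 𝟙 Q := congrArg (fun x => x.hom) hr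
  have hspC : sC ≫ pC = 𝟙 Q := congrArg (fun x => x.hom) hsp
  -- the idempotent `q = f ≫ (r ≫ s)` in `C`
  have hq : f ≫ (rC ≫ sC) = pC ≫ sC := by
    rw [← hgC, Category.assoc, ← Category.assoc gC rC sC, hrC, Category.id_comp]
  have hqq : (pC ≫ sC) ≫ (pC ≫ sC) = pC ≫ sC := by
    rw [Category.assoc, ← Category.assoc sC pC sC, hspC, Category.id_comp]
  -- the radical hypothesis forces `q = 0`
  have hiso : IsIso (𝟙 Y - pC ≫ sC) := by rw [← hq]; exact hf _
  have h0 : (pC ≫ sC) ≫ (𝟙 Y - pC ≫ sC) = 0 := by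
    rw [Preadditive.comp_sub, Category.comp_id, hqq, sub_self]
  have hq0 : pC ≫ sC = 0 := by
    have h4 : (pC ≫ sC) ≫ ((𝟙 Y - pC ≫ sC) ≫ inv (𝟙 Y - pC ≫ sC)) = 0 := by
      rw [← Category.assoc, h0, zero_comp]
    rw [IsIso.hom_inv_id, Category.comp_id] at h4
    exact h4
  -- hence `π = 0` and finally `f = 0`
  have hp0 : pC = 0 := by
    have h5 : pC = (pC ≫ sC) ≫ pC := by rw [Category.assoc, hspC, Category.comp_id]
    rw [h5, hq0, zero_comp]
  rw [← hgC, hp0, zero_comp]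

set_option maxHeartbeats 1000000 in
/-- A morphism of the weight heart all of whose "matrix entries" with respect to
decompositions into pure objects lie in the radical is killed by every `H^m`. -/
lemma H_map_eq_zero_of_rad {C : Type u} [Category.{v} C] [Preadditive C] [HasZeroObject C]
    [HasShift C ℤ] [∀ n : ℤ, (shiftFunctor C n).Additive] [Pretriangulated C]
    [HasFiniteBiproducts C]
    (P : TransversalPackage C) {M N : C}
    (hM : M ∈ P.wle 0 ∧ M ∈ P.wge 0) (hN : N ∈ P.wle 0 ∧ N ∈ P.wge 0) (α0 : M ⟶ N)
    (hC : ∀ β : N ⟶ M, IsIso (𝟙 M - α0 ≫ β)) (m : ℤ) : (P.H m).map α0 = 0 := by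
  haveI := P.H_additive m
  obtain ⟨k, Yf, degY, hYf, ⟨φ⟩⟩ := P.wheart_sum M hM.1 hM.2
  obtain ⟨l, Zf, degZ, hZf, ⟨ψ⟩⟩ := P.wheart_sum N hN.1 hN.2
  have hcomp : ∀ (i : Fin k) (j : Fin l),
      (P.H m).map (biproduct.ι Yf i ≫ (φ.inv ≫ α0 ≫ ψ.hom) ≫ biproduct.π Zf j) = 0 := by
    intro i j
    by_cases hd : degY i = degZ j
    · have hzero : biproduct.ι Yf i ≫ (φ.inv ≫ α0 ≫ ψ.hom) ≫ biproduct.π Zf j = 0 := by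
        apply semisimple_rad_zero P (degY i) (hYf i) (hd ▸ hZf j)
        intro β
        have hrw : biproduct.ι Yf i ≫ (φ.inv ≫ α0 ≫ ψ.hom) ≫ biproduct.π Zf j
            = (biproduct.ι Yf i ≫ φ.inv) ≫ α0 ≫ (ψ.hom ≫ biproduct.π Zf j) := by
          simp only [Category.assoc]
        rw [hrw]
        exact rad_ideal _ hC _ _ β
      rw [hzero, Functor.map_zero]
    · rcases eq_or_ne m (degY i) with hm | hm
      · have hz : IsZero ((P.H m).obj (Zf j)) := by
          rcases lt_or_gt_of_ne (show m ≠ degZ j by rw [hm]; exact hd) with h | h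
          · exact P.H_vanish_ge m (degZ j) (Zf j) (hZf j).2.2 h
          · exact P.H_vanish_le m (degZ j) (Zf j) (hZf j).2.1 h
        exact hz.eq_of_tgt _ _
      · have hz : IsZero ((P.H m).obj (Yf i)) := by
          rcases lt_or_gt_of_ne hm with h | h
          · exact P.H_vanish_ge m (degY i) (Yf i) (hYf i).2.2 h
          · exact P.H_vanish_le m (degY i) (Yf i) (hYf i).2.1 h
        exact hz.eq_of_src _ _
  have hdec : (φ.inv ≫ α0 ≫ ψ.hom) = ∑ i : Fin k, ∑ j : Fin l,
      biproduct.π Yf i ≫ biproduct.ι Yf i ≫ φ.inv ≫ α0 ≫ ψ.hom ≫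
        biproduct.π Zf j ≫ biproduct.ι Zf j := by
    conv_lhs => rw [← Category.id_comp (φ.inv ≫ α0 ≫ ψ.hom),
      ← Category.comp_id (φ.inv ≫ α0 ≫ ψ.hom)]
    rw [← biproduct.total, ← biproduct.total]
    simp only [Preadditive.sum_comp, Preadditive.comp_sum, Category.assoc]
    rw [Finset.sum_comm]
  have hHmid : (P.H m).map (φ.inv ≫ α0 ≫ ψ.hom) = 0 := by
    rw [hdec, Functor.map_sum]
    refine Finset.sum_eq_zero fun i _ => ?_
    rw [Functor.map_sum]
    refine Finset.sum_eq_zero fun j _ => ?_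
    have hrw : biproduct.π Yf i ≫ biproduct.ι Yf i ≫ φ.inv ≫ α0 ≫ ψ.hom ≫
        biproduct.π Zf j ≫ biproduct.ι Zf j
        = biproduct.π Yf i ≫ (biproduct.ι Yf i ≫ (φ.inv ≫ α0 ≫ ψ.hom) ≫
          biproduct.π Zf j) ≫ biproduct.ι Zf j := by
      simp only [Category.assoc]
    rw [hrw, Functor.map_comp, Functor.map_comp, hcomp i j, zero_comp, comp_zero]
  have hαdec : α0 = φ.hom ≫ (φ.inv ≫ α0 ≫ ψ.hom) ≫ ψ.inv := by simp
  have hsplit : (P.H m).map α0 = (P.H m).map φ.hom ≫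
      (P.H m).map (φ.inv ≫ α0 ≫ ψ.hom) ≫ (P.H m).map ψ.inv := by
    rw [← Functor.map_comp, ← Functor.map_comp, ← hαdec]
  rw [hsplit, hHmid, zero_comp, comp_zero]


/-- Corollary 1.H: given a bounded weight structure `w` and a bounded t-structure `t` on `C`
satisfying the transversality properties (a)–(d), and objects `M`, `N` of the heart `C_{w=0}`,
the radical of the heart `rad_{C_{w=0}}(M, N)` consists exactly of those morphisms `α : M ⟶ N`
with `H^m(α) = 0` for all `m ∈ ℤ`. -/
theorem corollary_1H (P : TransversalPackage C) (M N : C)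
    (hM : M ∈ P.wle 0 ∧ M ∈ P.wge 0) (hN : N ∈ P.wle 0 ∧ N ∈ P.wge 0) :
    radical (C := ObjectProperty.FullSubcategory (fun X : C => X ∈ P.wle 0 ∧ X ∈ P.wge 0))
        ⟨M, hM⟩ ⟨N, hN⟩ =
      {α : (⟨M, hM⟩ : ObjectProperty.FullSubcategory (fun X : C => X ∈ P.wle 0 ∧ X ∈ P.wge 0)) ⟶ ⟨N, hN⟩ |
        ∀ m : ℤ, (P.H m).map (show M ⟶ N from α.hom) = 0} := by
  apply Set.eq_of_subset_of_subset
  · -- a radical morphism is killed by all `H^m`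
    intro α hα
    intro m
    exact H_map_eq_zero_of_rad P hM hN _ (fun β => fullSub_isIso' _ (hα (ObjectProperty.homMk β))) m
  · -- a morphism killed by all `H^m` is radical
    intro α hα β
    have hiso : IsIso (𝟙 M - (show M ⟶ N from α.hom) ≫ (show N ⟶ M from β.hom)) := by
      apply P.H_conservative
      intro m'
      haveI := P.H_additive m'
      rw [Functor.map_sub, Functor.map_comp, hα m', zero_comp, CategoryTheory.Functor.map_id, sub_zero]
      infer_instance
    exact fullSub_isIso _ hiso


end Absolute
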